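/- Let n ≥ 3 and consider n₁ = n₂ = n−1. Let S be the following finite set of ℝ-linear endomorphisms of B = ℝ[x₁,…,xₙ,y₁,…,yₙ]: f ↦ −x_i·∂f/∂x_r − y_i·∂f/∂y_r for 1 ≤ i < r ≤ n−1, and f ↦ −x_i·xₙ·f + y_i·yₙ·f for 1 ≤ i ≤ n−1. Let m₁, m₂ ∈ ℕ, let ζ₁ = x_{n−2}·y_{n−1} − x_{n−1}·y_{n−2}, set v = x_{n−1}^{m₁}·ζ₁^{m₂+1}, and for k ∈ ℕ let W_k be the ℝ-linear span of all polynomials T₁(T₂(⋯T_j(v)⋯)) with 0 ≤ j ≤ k and T₁,…,T_j ∈ S. Then there exist real constants c₁, c₂ > 0 and K ∈ ℕ such that c₁·k^{n−1} ≤ dim W_k ≤ c₂·k^{n−1} for all k ≥ K. -/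

import Mathlib

open MvPolynomial

/-- Multiplication by a polynomial, as an ℝ-linear endomorphism. -/
noncomputable def mulE {σ : Type} (a : MvPolynomial σ ℝ) :
    Module.End ℝ (MvPolynomial σ ℝ) := LinearMap.mulLeft ℝ a

/-- Formal partial derivative ∂/∂v, as an ℝ-linear endomorphism. -/
noncomputable def pdE {σ : Type} [DecidableEq σ] (v : σ) :
    Module.End ℝ (MvPolynomial σ ℝ) := (pderiv v).toLinearMap

/-- The set S of negative-root-vector endomorphisms for n₁ = n₂ = n−1
(x's are `Sum.inl`, y's `Sum.inr`, 0-based indexing: 1 ≤ i < r ≤ n−1 becomes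
i < r, r.val < n−1; xₙ, yₙ are the variables with `Fin n` index of value n−1). -/
def Sset (n : ℕ) (h : 2 ≤ n) : Set (Module.End ℝ (MvPolynomial (Fin n ⊕ Fin n) ℝ)) :=
  {T | (∃ i r : Fin n, i < r ∧ r.val < n - 1 ∧
          T = -(mulE (X (Sum.inl i)) * pdE (Sum.inl r))
                - mulE (X (Sum.inr i)) * pdE (Sum.inr r)) ∨
       (∃ i : Fin n, i.val < n - 1 ∧
          T = -mulE (X (Sum.inl i) * X (Sum.inl (⟨n - 1, by omega⟩ : Fin n)))
                + mulE (X (Sum.inr i) * X (Sum.inr (⟨n - 1, by omega⟩ : Fin n))))}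

/-- W_k: span of all T₁(T₂(⋯T_j(v)⋯)) with 0 ≤ j ≤ k, T's in S. -/
noncomputable def Wk (n : ℕ) (S : Set (Module.End ℝ (MvPolynomial (Fin n ⊕ Fin n) ℝ)))
    (v : MvPolynomial (Fin n ⊕ Fin n) ℝ) (k : ℕ) :
    Submodule ℝ (MvPolynomial (Fin n ⊕ Fin n) ℝ) :=
  Submodule.span ℝ
    {f | ∃ l : List (Module.End ℝ (MvPolynomial (Fin n ⊕ Fin n) ℝ)),
      l.length ≤ k ∧ (∀ T ∈ l, T ∈ S) ∧ f = l.prod v}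

/-- ζ₁ = x_{n−2} y_{n−1} − x_{n−1} y_{n−2} (0-based indices n−3 and n−2). -/
noncomputable def zeta1 (n : ℕ) (h : 3 ≤ n) : MvPolynomial (Fin n ⊕ Fin n) ℝ :=
  X (Sum.inl (⟨n - 3, by omega⟩ : Fin n)) * X (Sum.inr (⟨n - 2, by omega⟩ : Fin n)) -
    X (Sum.inl (⟨n - 2, by omega⟩ : Fin n)) * X (Sum.inr (⟨n - 3, by omega⟩ : Fin n))


open Finset

section GenAux
variable {R ι : Type} [CommRing R] [Fintype ι] [DecidableEq ι]

lemma prod_pow_update_succ (b : ι → R) (α : ι → ℕ) (j : ι) :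
    ∏ i, b i ^ (Function.update α j (α j + 1)) i = b j * ∏ i, b i ^ α i := by
  rw [show (fun i => b i ^ (Function.update α j (α j + 1)) i)
      = Function.update (fun i => b i ^ α i) j (b j ^ (α j + 1)) by
    funext x
    by_cases h : x = j
    · subst h; simp
    · simp [Function.update_of_ne h]]
  rw [Finset.prod_update_of_mem (Finset.mem_univ j), pow_succ, sdiff_singleton_eq_erase,
    mul_comm (b j ^ α j) (b j), mul_assoc,
    Finset.mul_prod_erase univ (fun x => b x ^ α x) (Finset.mem_univ j)]

lemma prod_pow_split (b : ι → R) (α : ι → ℕ) (j : ι) :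
    ∏ i, b i ^ α i = b j ^ α j * ∏ i ∈ univ.erase j, b i ^ α i :=
  (Finset.mul_prod_erase univ (fun x => b x ^ α x) (Finset.mem_univ j)).symm

end GenAux

section Main
variable (n : ℕ)

local notation "Bpoly" => MvPolynomial (Fin n ⊕ Fin n) ℝ

variable (hn : 3 ≤ n)

noncomputable def bgen (i : Fin n) : Bpoly :=
  -(X (Sum.inl i) * X (Sum.inl (⟨n - 1, by omega⟩ : Fin n)))
    + X (Sum.inr i) * X (Sum.inr (⟨n - 1, by omega⟩ : Fin n))

noncomputable def Aapp (i r : Fin n) (f : Bpoly) : Bpoly :=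
  -(X (Sum.inl i) * pderiv (Sum.inl r) f) - X (Sum.inr i) * pderiv (Sum.inr r) f

lemma Aapp_mul (i r : Fin n) (p q : Bpoly) :
    Aapp n i r (p * q) = Aapp n i r p * q + p * Aapp n i r q := by
  simp only [Aapp, pderiv_mul]; ring

lemma Aapp_one (i r : Fin n) : Aapp n i r 1 = 0 := by
  simp [Aapp, pderiv_one]

lemma Aapp_bgen_self (i r : Fin n) (hr : r.val < n - 1) :
    Aapp n i r (bgen n hn r) = -(bgen n hn i) := by
  have hlr : (⟨n-1, by omega⟩ : Fin n) ≠ r := by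
    intro h; have := congrArg Fin.val h; simp at this; omega
  have h1 : (Sum.inl (⟨n-1, by omega⟩ : Fin n) : Fin n ⊕ Fin n) ≠ Sum.inl r := by simp [hlr]
  have h2 : (Sum.inr (⟨n-1, by omega⟩ : Fin n) : Fin n ⊕ Fin n) ≠ Sum.inr r := by simp [hlr]
  simp [Aapp, bgen, pderiv_mul, pderiv_X_of_ne h1, pderiv_X_of_ne h2]
  ring

lemma Aapp_bgen_ne (i r j : Fin n) (hr : r.val < n - 1) (hj : j ≠ r) :
    Aapp n i r (bgen n hn j) = 0 := by
  have h1 : (Sum.inl j : Fin n ⊕ Fin n) ≠ Sum.inl r := by simp [hj]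
  have h2 : (Sum.inr j : Fin n ⊕ Fin n) ≠ Sum.inr r := by simp [hj]
  have hlr : (⟨n-1, by omega⟩ : Fin n) ≠ r := by
    intro h; have := congrArg Fin.val h; simp at this; omega
  have h3 : (Sum.inl (⟨n-1, by omega⟩ : Fin n) : Fin n ⊕ Fin n) ≠ Sum.inl r := by simp [hlr]
  have h4 : (Sum.inr (⟨n-1, by omega⟩ : Fin n) : Fin n ⊕ Fin n) ≠ Sum.inr r := by simp [hlr]
  simp [Aapp, bgen, pderiv_mul, pderiv_X_of_ne h1, pderiv_X_of_ne h2,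
    pderiv_X_of_ne h3, pderiv_X_of_ne h4]

lemma Aapp_pow (i r : Fin n) (p : Bpoly) (m : ℕ) :
    Aapp n i r (p ^ m) = m • (p ^ (m-1) * Aapp n i r p) := by
  simp only [Aapp, pderiv_pow, nsmul_eq_mul]
  ring

noncomputable def Bp (α : Fin n → ℕ) : Bpoly := ∏ i, bgen n hn i ^ α i

def mvf (α : Fin n → ℕ) (i r : Fin n) : Fin n → ℕ :=
  Function.update (Function.update α r (α r - 1)) i (α i + 1)

lemma Aapp_prod_not_mem (i r : Fin n) (hr : r.val < n - 1) (s : Finset (Fin n)) (hs : r ∉ s)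
    (α : Fin n → ℕ) : Aapp n i r (∏ j ∈ s, bgen n hn j ^ α j) = 0 := by
  classical
  induction s using Finset.induction with
  | empty => simpa using Aapp_one n i r
  | @insert a s' hns ih =>
    rw [Finset.prod_insert hns, Aapp_mul, Aapp_pow,
      Aapp_bgen_ne n hn i r a hr (by rintro rfl; exact hs (Finset.mem_insert_self _ _)),
      ih (fun h => hs (Finset.mem_insert_of_mem h))]
    simp

lemma Aapp_Bp (i r : Fin n) (hir : i ≠ r) (hr : r.val < n - 1) (α : Fin n → ℕ) :
    Aapp n i r (Bp n hn α) = -((α r) • Bp n hn (mvf n α i r)) := by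
  classical
  have hP' : ∀ β : Fin n → ℕ, (∀ j, j ≠ r → β j = α j) →
      ∏ j ∈ univ.erase r, bgen n hn j ^ β j = ∏ j ∈ univ.erase r, bgen n hn j ^ α j := by
    intro β hβ
    exact Finset.prod_congr rfl (fun j hj => by rw [hβ j (Finset.ne_of_mem_erase hj)])
  rw [Bp, prod_pow_split (bgen n hn) α r, Aapp_mul, Aapp_pow, Aapp_bgen_self n hn i r hr,
    Aapp_prod_not_mem n hn i r hr _ (Finset.notMem_erase r univ) α]
  set β := Function.update α r (α r - 1) with hβdef
  have hmv : Bp n hn (mvf n α i r) =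
      bgen n hn i * (bgen n hn r ^ (α r - 1) * ∏ j ∈ univ.erase r, bgen n hn j ^ α j) := by
    have h1 : mvf n α i r = Function.update β i (β i + 1) := by
      rw [mvf, hβdef, Function.update_of_ne hir]
    rw [Bp, h1, prod_pow_update_succ (bgen n hn) β i, prod_pow_split (bgen n hn) β r,
      hP' β (fun j hj => Function.update_of_ne hj _ _)]
    simp [hβdef]
  rw [hmv, nsmul_eq_mul]
  push_cast
  ring

def Dg (s : (Fin n ⊕ Fin n) →₀ ℕ) : ℕ := ∑ a, s a

lemma Dg_eq_sum (s : (Fin n ⊕ Fin n) →₀ ℕ) : s.sum (fun _ e => e) = Dg n s := by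
  rw [Finsupp.sum_fintype]
  · rfl
  · intro; rfl

noncomputable def DkF (d₀ : ℕ) : Finset ((Fin n ⊕ Fin n) →₀ ℕ) :=
  ((Fintype.piFinset fun _ => Finset.range (d₀+1)).filter fun f => ∑ a, f a ≤ d₀).image
    Finsupp.equivFunOnFinite.symm

lemma mem_DkF (d₀ : ℕ) (s : (Fin n ⊕ Fin n) →₀ ℕ) : s ∈ DkF n d₀ ↔ Dg n s ≤ d₀ := by
  constructor
  · rintro hs
    simp only [DkF, Finset.mem_image, Finset.mem_filter] at hs
    obtain ⟨f, ⟨-, hf2⟩, rfl⟩ := hs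
    simpa [Dg] using hf2
  · intro h
    simp only [DkF, Finset.mem_image, Finset.mem_filter]
    refine ⟨Finsupp.equivFunOnFinite s, ⟨?_, ?_⟩, by simp⟩
    · rw [Fintype.mem_piFinset]
      intro a
      rw [Finset.mem_range]
      have : s a ≤ Dg n s := Finset.single_le_sum (fun _ _ => Nat.zero_le _) (mem_univ a)
      simp only [Finsupp.equivFunOnFinite_apply]
      omega
    · simpa [Dg] using h

noncomputable def DmonF (d₀ : ℕ) : Finset Bpoly :=
  (DkF n d₀).image (fun s => monomial s (1:ℝ))

noncomputable def Dspan (d₀ : ℕ) : Submodule ℝ Bpoly :=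
  Submodule.span ℝ (DmonF n d₀ : Set Bpoly)

lemma mem_Dspan_of_totalDegree_le {p : Bpoly} {d₀ : ℕ} (h : p.totalDegree ≤ d₀) :
    p ∈ Dspan n d₀ := by
  rw [p.as_sum]
  apply Submodule.sum_mem
  intro s hs
  have hd : Dg n s ≤ d₀ := by
    rw [← Dg_eq_sum]
    exact (le_totalDegree hs).trans h
  have : monomial s (coeff s p) = (coeff s p) • monomial s (1:ℝ) := by
    rw [smul_monomial, smul_eq_mul, mul_one]
  rw [this]
  exact Submodule.smul_mem _ _ (Submodule.subset_span
    (by simp only [DmonF, Finset.coe_image, Set.mem_image]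
        exact ⟨s, by simpa [mem_DkF] using hd, rfl⟩))

lemma Dg_move_le {s : (Fin n ⊕ Fin n) →₀ ℕ} {j v : Fin n ⊕ Fin n} (hv : s v ≠ 0) :
    Dg n (Finsupp.single j 1 + (s - Finsupp.single v 1)) ≤ Dg n s := by
  classical
  simp only [Dg, Finsupp.add_apply, Finsupp.tsub_apply, Finset.sum_add_distrib]
  have h1 : ∑ a, (Finsupp.single j 1) a = 1 := by
    simp [Finsupp.single_apply, Finset.sum_ite_eq]
  rw [h1]
  have h2 : ∑ a, (s a - (Finsupp.single v 1) a)
      = (s v - 1) + ∑ a ∈ univ.erase v, s a := by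
    rw [← Finset.add_sum_erase _ _ (mem_univ v)]
    congr 1
    · simp
    · exact Finset.sum_congr rfl (fun a ha => by
        rw [Finsupp.single_apply, if_neg (Ne.symm (Finset.ne_of_mem_erase ha)), Nat.sub_zero])
  have h3 : ∑ a, s a = s v + ∑ a ∈ univ.erase v, s a :=
    (Finset.add_sum_erase _ _ (mem_univ v)).symm
  omega

lemma X_mul_monomial' (j : Fin n ⊕ Fin n) (t : (Fin n ⊕ Fin n) →₀ ℕ) (c : ℝ) :
    X j * monomial t c = monomial (Finsupp.single j 1 + t) c := by
  rw [X, monomial_mul, one_mul]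

lemma Aapp_monomial_mem (i r : Fin n) {d₀ : ℕ} {s : (Fin n ⊕ Fin n) →₀ ℕ}
    (hs : Dg n s ≤ d₀) : Aapp n i r (monomial s (1:ℝ)) ∈ Dspan n d₀ := by
  have key : ∀ j v : Fin n ⊕ Fin n,
      X j * pderiv v (monomial s (1:ℝ)) ∈ Dspan n d₀ := by
    intro j v
    rw [pderiv_monomial, one_mul, X_mul_monomial']
    by_cases hv : s v = 0
    · rw [hv]; simp
    · have : (monomial (Finsupp.single j 1 + (s - Finsupp.single v 1)) ((s v : ℝ)))
          = (s v : ℝ) • monomial (Finsupp.single j 1 + (s - Finsupp.single v 1)) (1:ℝ) := by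
        rw [smul_monomial, smul_eq_mul, mul_one]
      rw [this]
      refine Submodule.smul_mem _ _ (Submodule.subset_span ?_)
      simp only [DmonF, Finset.coe_image, Set.mem_image]
      exact ⟨_, by simpa [mem_DkF] using (Dg_move_le n hv).trans hs, rfl⟩
  exact Submodule.sub_mem _ (Submodule.neg_mem _ (key _ _)) (key _ _)

noncomputable def AkF (k : ℕ) : Finset (Fin n → ℕ) :=
  Fintype.piFinset (fun i => Finset.range (if i.val = n-1 then 1 else k+1))

lemma mem_AkF (k : ℕ) (α : Fin n → ℕ) :
    α ∈ AkF n k ↔ ∀ i : Fin n, α i < if i.val = n-1 then 1 else k+1 := by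
  rw [AkF, Fintype.mem_piFinset]
  simp [Finset.mem_range]

lemma mem_AkF' (k : ℕ) (α : Fin n → ℕ) :
    α ∈ AkF n k ↔ ∀ i : Fin n, α i ≤ k ∧ (i.val = n-1 → α i = 0) := by
  rw [mem_AkF]
  constructor
  · intro h i
    have := h i
    split at this
    · exact ⟨by omega, fun _ => by omega⟩
    · exact ⟨by omega, fun hv => by simp_all⟩
  · intro h i
    obtain ⟨h1, h2⟩ := h i
    split
    · rename_i hv; omega
    · omega

lemma AkF_mono {k k' : ℕ} (h : k ≤ k') : AkF n k ⊆ AkF n k' := by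
  intro α hα
  rw [mem_AkF] at *
  intro i
  have := hα i
  split at this <;> split <;> omega

include hn in
lemma AkF_card (k : ℕ) : (AkF n k).card = (k+1)^(n-1) := by
  rw [AkF, Fintype.card_piFinset]
  rw [show (fun i : Fin n => (Finset.range (if i.val = n-1 then 1 else k+1)).card)
      = fun i : Fin n => if i.val = n-1 then 1 else k+1 by
    funext i; split <;> simp_all [Finset.card_range]]
  rw [Finset.prod_ite (fun _ => 1) (fun _ => k+1), Finset.prod_const, Finset.prod_const,
    one_pow, one_mul]
  congr 1
  have h1 : Finset.filter (fun i : Fin n => i.val = n-1) univ = {(⟨n-1, by omega⟩ : Fin n)} := by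
    ext i
    simp only [Finset.mem_filter, Finset.mem_singleton, mem_univ, true_and, Fin.ext_iff]
  have h2 := Finset.card_filter_add_card_filter_not
    (s := (univ : Finset (Fin n))) (p := fun i : Fin n => i.val = n-1)
  rw [h1] at h2
  simp only [Finset.card_singleton, Finset.card_univ, Fintype.card_fin] at h2
  omega

/-- The bounding space M_k -/
noncomputable def Msub (d₀ k : ℕ) : Submodule ℝ Bpoly :=
  Submodule.span ℝ
    (((AkF n k ×ˢ DkF n d₀).image fun p => Bp n hn p.1 * monomial p.2 (1:ℝ) : Finset Bpoly) :
      Set Bpoly)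

lemma gen_mem_Msub {d₀ k : ℕ} {α : Fin n → ℕ} {s : (Fin n ⊕ Fin n) →₀ ℕ}
    (hα : α ∈ AkF n k) (hs : s ∈ DkF n d₀) :
    Bp n hn α * monomial s (1:ℝ) ∈ Msub n hn d₀ k := by
  apply Submodule.subset_span
  simp only [Finset.coe_image, Set.mem_image]
  exact ⟨(α, s), by simp [Finset.mem_product, hα, hs], rfl⟩

lemma Bp_mul_mem {d₀ k : ℕ} {α : Fin n → ℕ} (hα : α ∈ AkF n k) {p : Bpoly}
    (hp : p ∈ Dspan n d₀) : Bp n hn α * p ∈ Msub n hn d₀ k := by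
  induction hp using Submodule.span_induction with
  | mem x hx =>
    simp only [DmonF, Finset.coe_image, Set.mem_image] at hx
    obtain ⟨s, hs, rfl⟩ := hx
    exact gen_mem_Msub n hn hα (by simpa using hs)
  | zero => simpa using Submodule.zero_mem _
  | add x y _ _ hx hy => rw [mul_add]; exact Submodule.add_mem _ hx hy
  | smul c x _ hx => rw [mul_smul_comm]; exact Submodule.smul_mem _ _ hx

lemma Msub_mono (d₀ : ℕ) {k k' : ℕ} (h : k ≤ k') : Msub n hn d₀ k ≤ Msub n hn d₀ k' := by
  apply Submodule.span_mono
  intro f hf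
  simp only [Finset.coe_image, Set.mem_image] at *
  obtain ⟨⟨α, s⟩, hmem, rfl⟩ := hf
  rw [Finset.mem_coe, Finset.mem_product] at hmem
  exact ⟨(α, s), by
    rw [Finset.mem_coe, Finset.mem_product]
    exact ⟨AkF_mono n h hmem.1, hmem.2⟩, rfl⟩


include hn in
lemma Sderiv_apply (i r : Fin n) (f : MvPolynomial (Fin n ⊕ Fin n) ℝ) :
    (-(mulE (X (Sum.inl i)) * pdE (Sum.inl r))
        - mulE (X (Sum.inr i)) * pdE (Sum.inr r) : Module.End ℝ Bpoly) f = Aapp n i r f := by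
  simp only [LinearMap.sub_apply, LinearMap.neg_apply, Module.End.mul_apply]
  rfl

include hn in
lemma Smul_apply (i : Fin n) (h2 : 2 ≤ n) (f : MvPolynomial (Fin n ⊕ Fin n) ℝ) :
    (-mulE (X (Sum.inl i) * X (Sum.inl (⟨n - 1, by omega⟩ : Fin n)))
        + mulE (X (Sum.inr i) * X (Sum.inr (⟨n - 1, by omega⟩ : Fin n)))
        : Module.End ℝ Bpoly) f = bgen n hn i * f := by
  simp only [LinearMap.add_apply, LinearMap.neg_apply]
  show -((X (Sum.inl i) * X (Sum.inl _)) * f) + (X (Sum.inr i) * X (Sum.inr _)) * f = _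
  rw [bgen]
  ring

lemma Msub_stable {d₀ k : ℕ} (T : Module.End ℝ Bpoly) (hT : T ∈ Sset n (Nat.le_of_succ_le hn))
    {f : MvPolynomial (Fin n ⊕ Fin n) ℝ} (hf : f ∈ Msub n hn d₀ k) :
    T f ∈ Msub n hn d₀ (k+1) := by
  induction hf using Submodule.span_induction with
  | zero => rw [map_zero]; exact Submodule.zero_mem _
  | add x y _ _ hx hy => rw [map_add]; exact Submodule.add_mem _ hx hy
  | smul c x _ hx => rw [map_smul]; exact Submodule.smul_mem _ _ hx
  | mem x hx =>
    simp only [Finset.coe_image, Set.mem_image] at hx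
    obtain ⟨⟨α, s⟩, hmem, rfl⟩ := hx
    rw [Finset.mem_coe, Finset.mem_product] at hmem
    obtain ⟨hα, hs⟩ := hmem
    dsimp only at hα hs ⊢
    rcases hT with ⟨i, r, hir, hr, rfl⟩ | ⟨i, hi, rfl⟩
    · -- derivation type operator
      have hirne : i ≠ r := Fin.ne_of_lt hir
      have hival : i.val < n - 1 := lt_trans hir hr
      rw [Sderiv_apply n hn, Aapp_mul, Aapp_Bp n hn i r hirne hr, neg_mul, smul_mul_assoc]
      apply Submodule.add_mem
      · apply Submodule.neg_mem
        rw [← Nat.cast_smul_eq_nsmul ℝ]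
        apply Submodule.smul_mem
        apply gen_mem_Msub n hn _ hs
        rw [mem_AkF'] at hα ⊢
        intro j
        obtain ⟨hi1, hi2⟩ := hα i
        obtain ⟨hj1, hj2⟩ := hα j
        obtain ⟨hr1, hr2⟩ := hα r
        rw [mvf, Function.update_apply, Function.update_apply]
        split_ifs with hji hjr
        · have hv' := congrArg Fin.val hji
          refine ⟨by omega, fun hv => by omega⟩
        · have hv' := congrArg Fin.val hjr
          refine ⟨by omega, fun hv => by omega⟩
        · exact ⟨by omega, fun hv => by omega⟩
      · apply Bp_mul_mem n hn (AkF_mono n (Nat.le_succ k) hα)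
        exact Aapp_monomial_mem n i r ((mem_DkF n d₀ s).mp hs)
    · -- multiplication type operator
      rw [Smul_apply n hn i (Nat.le_of_succ_le hn), ← mul_assoc]
      have : bgen n hn i * Bp n hn α
          = Bp n hn (Function.update α i (α i + 1)) := by
        rw [Bp, Bp, prod_pow_update_succ (bgen n hn) α i]
      rw [this]
      apply gen_mem_Msub n hn _ hs
      rw [mem_AkF'] at hα ⊢
      intro j
      obtain ⟨hi1, hi2⟩ := hα i
      obtain ⟨hj1, hj2⟩ := hα j
      rw [Function.update_apply]
      split_ifs with hji
      · have hv' := congrArg Fin.val hji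
        refine ⟨by omega, fun hv => by omega⟩
      · exact ⟨by omega, fun hv => by omega⟩

lemma Wk_le_Msub {d₀ k : ℕ} {v : MvPolynomial (Fin n ⊕ Fin n) ℝ} (hv : v ∈ Dspan n d₀) :
    Wk n (Sset n (Nat.le_of_succ_le hn)) v k ≤ Msub n hn d₀ k := by
  have hv0 : v ∈ Msub n hn d₀ 0 := by
    have := Bp_mul_mem n hn (α := fun _ => 0) (k := 0)
      (by rw [mem_AkF]; intro i; split <;> omega) hv
    rwa [Bp, show ∏ i : Fin n, bgen n hn i ^ (0:ℕ) = 1 by simp, one_mul] at this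
  rw [Wk, Submodule.span_le]
  rintro f ⟨l, hlen, hmem, rfl⟩
  have key : ∀ l : List (Module.End ℝ Bpoly), (∀ T ∈ l, T ∈ Sset n (Nat.le_of_succ_le hn)) →
      l.prod v ∈ Msub n hn d₀ l.length := by
    intro l
    induction l with
    | nil => intro _; simpa using hv0
    | cons T l' ih =>
      intro hl
      rw [List.prod_cons, List.length_cons, Module.End.mul_apply]
      exact Msub_stable n hn T (hl T List.mem_cons_self)
        (ih (fun T' hT' => hl T' (List.mem_cons_of_mem _ hT')))
  exact Msub_mono n hn d₀ hlen (key l hmem)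



/-! ### Lower bound machinery -/

lemma Wk_mono (S : Set (Module.End ℝ Bpoly)) (v : MvPolynomial (Fin n ⊕ Fin n) ℝ)
    {k k' : ℕ} (h : k ≤ k') : Wk n S v k ≤ Wk n S v k' := by
  apply Submodule.span_mono
  rintro f ⟨l, h1, h2, h3⟩
  exact ⟨l, h1.trans h, h2, h3⟩

lemma v_mem_Wk (S : Set (Module.End ℝ Bpoly)) (v : MvPolynomial (Fin n ⊕ Fin n) ℝ) (k : ℕ) :
    v ∈ Wk n S v k := by
  apply Submodule.subset_span
  exact ⟨[], by simp, by simp, by simp⟩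

lemma Wk_op_mem (S : Set (Module.End ℝ Bpoly)) (v : MvPolynomial (Fin n ⊕ Fin n) ℝ)
    (T : Module.End ℝ Bpoly) (hT : T ∈ S) {k : ℕ} {f : MvPolynomial (Fin n ⊕ Fin n) ℝ}
    (hf : f ∈ Wk n S v k) : T f ∈ Wk n S v (k+1) := by
  induction hf using Submodule.span_induction with
  | zero => rw [map_zero]; exact Submodule.zero_mem _
  | add x y _ _ hx hy => rw [map_add]; exact Submodule.add_mem _ hx hy
  | smul c x _ hx => rw [map_smul]; exact Submodule.smul_mem _ _ hx
  | mem x hx =>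
    obtain ⟨l, h1, h2, rfl⟩ := hx
    apply Submodule.subset_span
    refine ⟨T :: l, by simpa using h1, ?_, by rw [List.prod_cons, Module.End.mul_apply]⟩
    intro T' hT'
    rcases List.mem_cons.mp hT' with rfl | hmem
    · exact hT
    · exact h2 T' hmem

lemma Bp_v_mem_Wk (h2 : 2 ≤ n) (v : MvPolynomial (Fin n ⊕ Fin n) ℝ) :
    ∀ (m : ℕ) (α : Fin n → ℕ), ∑ i, α i = m → (∀ j : Fin n, j.val = n-1 → α j = 0) →
      Bp n hn α * v ∈ Wk n (Sset n h2) v m := by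
  intro m
  induction m with
  | zero =>
    intro α hsum hsupp
    have hz : ∀ i : Fin n, α i = 0 := by
      intro i
      exact Finset.sum_eq_zero_iff.mp hsum i (mem_univ i)
    rw [show Bp n hn α = 1 from Finset.prod_eq_one (fun i _ => by rw [hz i, pow_zero]), one_mul]
    exact v_mem_Wk n (Sset n h2) v 0
  | succ m ih =>
    intro α hsum hsupp
    have hex : ∃ j, α j ≠ 0 := by
      by_contra h
      push_neg at h
      rw [Finset.sum_eq_zero (fun i _ => h i)] at hsum
      omega
    obtain ⟨j, hj⟩ := hex
    have hjval : j.val < n - 1 := by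
      have hlt := j.isLt
      by_contra h
      exact hj (hsupp j (by omega))
    set β := Function.update α j (α j - 1) with hβ
    have hsumsplit := (Finset.add_sum_erase univ α (mem_univ j)).symm
    have hβsum : ∑ i, β i = m := by
      rw [hβ, Finset.sum_update_of_mem (mem_univ j), sdiff_singleton_eq_erase]
      omega
    have hβsupp : ∀ j' : Fin n, j'.val = n-1 → β j' = 0 := by
      intro j' h'
      by_cases hx : j' = j
      · subst hx; omega
      · rw [hβ, Function.update_of_ne hx]; exact hsupp j' h'
    have hTS : (-mulE (X (Sum.inl j) * X (Sum.inl (⟨n - 1, by omega⟩ : Fin n)))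
        + mulE (X (Sum.inr j) * X (Sum.inr (⟨n - 1, by omega⟩ : Fin n)))
        : Module.End ℝ Bpoly) ∈ Sset n h2 := Or.inr ⟨j, hjval, rfl⟩
    have hstep := Wk_op_mem n (Sset n h2) v _ hTS (ih β hβsum hβsupp)
    have hupd : Function.update β j (β j + 1) = α := by
      funext x
      by_cases hx : x = j
      · subst hx
        rw [Function.update_self, hβ, Function.update_self]
        omega
      · rw [Function.update_of_ne hx, hβ, Function.update_of_ne hx]
    have hmul : bgen n hn j * Bp n hn β = Bp n hn α := by
      rw [← hupd]
      exact (prod_pow_update_succ (bgen n hn) β j).symm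
    rwa [Smul_apply n hn j h2, ← mul_assoc, hmul] at hstep

/-- the highest weight vector -/
noncomputable def vp (m₁ m₂ : ℕ) : Bpoly :=
  X (Sum.inl (⟨n - 2, by omega⟩ : Fin n)) ^ m₁ * zeta1 n hn ^ (m₂ + 1)

lemma vp_totalDegree (m₁ m₂ : ℕ) : (vp n hn m₁ m₂).totalDegree ≤ m₁ + 2*(m₂+1) := by
  have hz : (zeta1 n hn).totalDegree ≤ 2 := by
    refine (totalDegree_sub _ _).trans ?_
    apply max_le <;>
      exact (totalDegree_mul _ _).trans (by simp [totalDegree_X])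
  refine (totalDegree_mul _ _).trans ?_
  have h1 : (X (Sum.inl (⟨n - 2, by omega⟩ : Fin n)) ^ m₁ : Bpoly).totalDegree ≤ m₁ :=
    (totalDegree_pow _ _).trans (by simp [totalDegree_X])
  have h2 : ((zeta1 n hn) ^ (m₂+1)).totalDegree ≤ 2*(m₂+1) :=
    (totalDegree_pow _ _).trans (by nlinarith)
  omega

lemma vp_ne_zero (m₁ m₂ : ℕ) : vp n hn m₁ m₂ ≠ 0 := by
  classical
  intro hv
  have heval : eval (Sum.elim (fun _ : Fin n => (1:ℝ))
      (fun i : Fin n => if (i:ℕ) = n - 2 then 1 else 0)) (vp n hn m₁ m₂) = 1 := by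
    rw [vp, zeta1]
    simp only [eval_mul, eval_pow, eval_sub, eval_X, Sum.elim_inl, Sum.elim_inr]
    rw [if_neg (show ¬ (n - 3 : ℕ) = n - 2 by omega)]
    norm_num
  rw [hv] at heval
  simp at heval

lemma vp_mem_Dspan (m₁ m₂ : ℕ) : vp n hn m₁ m₂ ∈ Dspan n (m₁ + 2*(m₂+1)) :=
  mem_Dspan_of_totalDegree_le n (vp_totalDegree n hn m₁ m₂)

/-- the specialization sending y_{n-1} to 0 -/
noncomputable def psiMap : Bpoly →ₐ[ℝ] Bpoly :=
  aeval (fun s : Fin n ⊕ Fin n =>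
    if s = Sum.inr (⟨n - 1, by omega⟩ : Fin n) then (0 : Bpoly) else X s)

lemma psiMap_bgen (j : Fin n) :
    psiMap n hn (bgen n hn j)
      = -(X (Sum.inl j) * X (Sum.inl (⟨n - 1, by omega⟩ : Fin n))) := by
  rw [bgen, psiMap, map_add, map_neg, map_mul, map_mul, aeval_X, aeval_X, aeval_X, aeval_X]
  rw [if_neg (by simp), if_neg (by simp), if_pos rfl, mul_zero, add_zero]

lemma psiMap_vp (m₁ m₂ : ℕ) : psiMap n hn (vp n hn m₁ m₂) = vp n hn m₁ m₂ := by
  have hX : ∀ x : Fin n ⊕ Fin n, x ≠ Sum.inr (⟨n - 1, by omega⟩ : Fin n) →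
      psiMap n hn (X x) = X x := by
    intro x hx
    rw [psiMap, aeval_X, if_neg hx]
  have hne : ∀ x : Fin n, x.val < n - 1 →
      (Sum.inr x : Fin n ⊕ Fin n) ≠ Sum.inr (⟨n - 1, by omega⟩ : Fin n) := by
    intro x hx
    simp only [ne_eq, Sum.inr.injEq]
    intro h
    have := congrArg Fin.val h
    simp at this
    omega
  have hne2 : (Sum.inr (⟨n-2, by omega⟩ : Fin n) : Fin n ⊕ Fin n)
      ≠ Sum.inr (⟨n-1, by omega⟩ : Fin n) := by
    rw [ne_eq, Sum.inr.injEq, Fin.mk.injEq]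
    omega
  have hne3 : (Sum.inr (⟨n-3, by omega⟩ : Fin n) : Fin n ⊕ Fin n)
      ≠ Sum.inr (⟨n-1, by omega⟩ : Fin n) := by
    rw [ne_eq, Sum.inr.injEq, Fin.mk.injEq]
    omega
  rw [vp, zeta1, map_mul, map_pow, map_pow, map_sub, map_mul, map_mul,
    hX _ (by simp), hX _ (by simp), hX _ hne2, hX _ hne3]

lemma prod_monomial_one {τ : Type} (s : Finset τ) (g : τ → ((Fin n ⊕ Fin n) →₀ ℕ)) :
    (∏ t ∈ s, (monomial (g t) (1:ℝ) : Bpoly)) = monomial (∑ t ∈ s, g t) (1:ℝ) := by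
  classical
  induction s using Finset.induction with
  | empty => simp [monomial_zero']
  | @insert a s' hns ih =>
    rw [Finset.prod_insert hns, Finset.sum_insert hns, ih, monomial_mul, one_mul]

/-- exponent finsupp for the image monomials -/
noncomputable def tfin (γ : Fin n → ℕ) : (Fin n ⊕ Fin n) →₀ ℕ :=
  Finsupp.equivFunOnFinite.symm
    (Sum.elim (Function.update γ (⟨n - 1, by omega⟩ : Fin n) (∑ j, γ j)) 0)

lemma prod_X_pow_eq_monomial_tfin (γ : Fin n → ℕ)
    (hlast : γ (⟨n - 1, by omega⟩ : Fin n) = 0) :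
    ((∏ j, (X (Sum.inl j) : Bpoly) ^ γ j) * X (Sum.inl (⟨n - 1, by omega⟩ : Fin n)) ^ (∑ j, γ j))
      = monomial (tfin n hn γ) (1:ℝ) := by
  classical
  have h1 : ∀ j : Fin n, (X (Sum.inl j) : Bpoly) ^ γ j
      = monomial (Finsupp.single (Sum.inl j) (γ j)) 1 := fun j => X_pow_eq_monomial
  simp_rw [h1]
  rw [prod_monomial_one, X_pow_eq_monomial, monomial_mul, one_mul]
  have key : (∑ j, Finsupp.single (Sum.inl j : Fin n ⊕ Fin n) (γ j))
      + Finsupp.single (Sum.inl (⟨n - 1, by omega⟩ : Fin n) : Fin n ⊕ Fin n) (∑ j, γ j)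
      = tfin n hn γ := by
    refine Finsupp.ext fun s => ?_
    rw [Finsupp.add_apply, Finsupp.finset_sum_apply]
    rcases s with x | x
    · simp only [Finsupp.single_apply, tfin, Finsupp.coe_equivFunOnFinite_symm,
        Sum.elim_inl]
      rw [Finset.sum_eq_single x (fun b _ hb => by rw [if_neg (by simp [hb])]) (by simp),
        if_pos rfl]
      by_cases hx : x = (⟨n - 1, by omega⟩ : Fin n)
      · subst hx
        rw [Function.update_self, if_pos rfl, hlast, zero_add]
      · rw [Function.update_of_ne hx, if_neg (by simp [Ne.symm hx]), add_zero]
    · simp only [Finsupp.single_apply, tfin, Finsupp.coe_equivFunOnFinite_symm,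
        Sum.elim_inr, Pi.zero_apply]
      rw [Finset.sum_eq_zero (fun b _ => by rw [if_neg (by simp)]), if_neg (by simp)]
      rfl
  rw [key]

lemma psiMap_Bp_mul_vp (m₁ m₂ : ℕ) (γ : Fin n → ℕ)
    (hlast : γ (⟨n - 1, by omega⟩ : Fin n) = 0) :
    psiMap n hn (Bp n hn γ * vp n hn m₁ m₂)
      = ((-1 : ℝ) ^ (∑ j, γ j)) • (monomial (tfin n hn γ) (1:ℝ) * vp n hn m₁ m₂) := by
  rw [map_mul, psiMap_vp, Bp, map_prod]
  simp_rw [map_pow, psiMap_bgen]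
  have : (∏ j, (-(X (Sum.inl j) * X (Sum.inl (⟨n - 1, by omega⟩ : Fin n)) : Bpoly)) ^ γ j)
      = ((-1 : Bpoly) ^ (∑ j, γ j))
        * ((∏ j, (X (Sum.inl j) : Bpoly) ^ γ j)
            * X (Sum.inl (⟨n - 1, by omega⟩ : Fin n)) ^ (∑ j, γ j)) := by
    rw [Finset.prod_congr rfl (fun j _ => by
      rw [← neg_one_mul (X (Sum.inl j) * X (Sum.inl (⟨n - 1, by omega⟩ : Fin n)) : Bpoly),
        mul_pow, mul_pow])]
    rw [Finset.prod_mul_distrib, Finset.prod_mul_distrib,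
      Finset.prod_pow_eq_pow_sum, Finset.prod_pow_eq_pow_sum]
  rw [this, prod_X_pow_eq_monomial_tfin n hn γ hlast, smul_eq_C_mul, C_pow, C_neg, C_1]
  ring


/-! ### finrank bounds -/

include hn in
lemma finrank_Wk_le (m₁ m₂ k : ℕ) :
    Module.finrank ℝ (Wk n (Sset n (Nat.le_of_succ_le hn)) (vp n hn m₁ m₂) k)
      ≤ (k+1)^(n-1) * (DkF n (m₁ + 2*(m₂+1))).card := by
  set d₀ := m₁ + 2*(m₂+1) with hd₀
  have hle : Wk n (Sset n (Nat.le_of_succ_le hn)) (vp n hn m₁ m₂) k ≤ Msub n hn d₀ k :=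
    Wk_le_Msub n hn (vp_mem_Dspan n hn m₁ m₂)
  haveI : FiniteDimensional ℝ (Msub n hn d₀ k) := by
    rw [Msub]
    infer_instance
  have h2 : Module.finrank ℝ (Msub n hn d₀ k)
      ≤ ((AkF n k ×ˢ DkF n d₀).image fun p => Bp n hn p.1 * monomial p.2 (1:ℝ)).card :=
    finrank_span_finset_le_card _
  have h3 := (Finset.card_image_le (s := AkF n k ×ˢ DkF n d₀)
    (f := fun p => Bp n hn p.1 * monomial p.2 (1:ℝ)))
  rw [Finset.card_product, AkF_card n hn] at h3
  exact le_trans (Submodule.finrank_mono hle) (le_trans h2 h3)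

/-- extension of a bounded exponent tuple -/
def extf (q : ℕ) (α : Fin (n-1) → Fin (q+1)) : Fin n → ℕ :=
  fun j => if h : (j : ℕ) < n - 1 then (α ⟨j, h⟩ : ℕ) else 0

lemma extf_last (q : ℕ) (α : Fin (n-1) → Fin (q+1)) :
    ∀ j : Fin n, j.val = n-1 → extf n q α j = 0 := by
  intro j hj
  rw [extf, dif_neg (by omega)]

lemma extf_sum_le (q : ℕ) (α : Fin (n-1) → Fin (q+1)) : ∑ j, extf n q α j ≤ n * q := by
  have h1 : ∀ j : Fin n, extf n q α j ≤ q := by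
    intro j
    rw [extf]
    split
    · exact Fin.is_le _
    · omega
  calc ∑ j, extf n q α j ≤ ∑ _j : Fin n, q := Finset.sum_le_sum (fun j _ => h1 j)
    _ = n * q := by rw [Finset.sum_const, Finset.card_univ, Fintype.card_fin, smul_eq_mul]

lemma tfin_extf_inj (q : ℕ) :
    Function.Injective (fun α : Fin (n-1) → Fin (q+1) => tfin n hn (extf n q α)) := by
  intro a b h
  funext j
  have hjn : (j : ℕ) < n - 1 := j.isLt
  have := congrArg (fun t : (Fin n ⊕ Fin n) →₀ ℕ =>
    t (Sum.inl (⟨(j : ℕ), by omega⟩ : Fin n))) h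
  simp only [tfin, Finsupp.coe_equivFunOnFinite_symm, Sum.elim_inl] at this
  rw [Function.update_of_ne (by simp [Fin.ext_iff]; omega),
    Function.update_of_ne (by simp [Fin.ext_iff]; omega)] at this
  simp only [extf, dif_pos hjn] at this
  have hfin : (⟨(j : ℕ), hjn⟩ : Fin (n-1)) = j := by simp [Fin.ext_iff]
  rw [hfin] at this
  exact Fin.ext this

lemma lin_indep_F (m₁ m₂ q : ℕ) :
    LinearIndependent ℝ (fun α : Fin (n-1) → Fin (q+1) =>
      Bp n hn (extf n q α) * vp n hn m₁ m₂) := by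
  classical
  have h1 : LinearIndependent ℝ
      (fun s : (Fin n ⊕ Fin n) →₀ ℕ => (monomial s (1:ℝ) : Bpoly)) := by
    have := (basisMonomials (Fin n ⊕ Fin n) ℝ).linearIndependent
    rwa [coe_basisMonomials] at this
  have h2 := h1.comp _ (tfin_extf_inj n hn q)
  have hker : LinearMap.ker (LinearMap.mulLeft ℝ (vp n hn m₁ m₂)) = ⊥ := by
    rw [LinearMap.ker_eq_bot]
    intro x y hxy
    simp only [LinearMap.mulLeft_apply] at hxy
    exact mul_left_cancel₀ (vp_ne_zero n hn m₁ m₂) hxy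
  have h3 := h2.map' (LinearMap.mulLeft ℝ (vp n hn m₁ m₂)) hker
  have h4 := h3.units_smul (fun α : Fin (n-1) → Fin (q+1) =>
    ((-1 : ℝˣ) ^ (∑ j, extf n q α j)))
  apply LinearIndependent.of_comp (psiMap n hn).toLinearMap
  have heq : ((psiMap n hn).toLinearMap ∘ fun α : Fin (n-1) → Fin (q+1) =>
        Bp n hn (extf n q α) * vp n hn m₁ m₂)
      = (fun α : Fin (n-1) → Fin (q+1) => ((-1 : ℝˣ) ^ (∑ j, extf n q α j)) •
          ((LinearMap.mulLeft ℝ (vp n hn m₁ m₂) ∘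
            (fun s : (Fin n ⊕ Fin n) →₀ ℕ => (monomial s (1:ℝ) : Bpoly)) ∘
            (fun α : Fin (n-1) → Fin (q+1) => tfin n hn (extf n q α))) α)) := by
    funext α
    simp only [Function.comp_apply, LinearMap.mulLeft_apply, AlgHom.toLinearMap_apply]
    rw [psiMap_Bp_mul_vp n hn m₁ m₂ (extf n q α) (extf_last n q α _ rfl)]
    rw [Units.smul_def, Units.val_pow_eq_pow_val, Units.val_neg, Units.val_one]
    rw [mul_comm (vp n hn m₁ m₂)]
  rw [heq]
  exact h4

include hn in
lemma card_le_finrank_Wk (m₁ m₂ k : ℕ) :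
    (k / n + 1)^(n-1) ≤
      Module.finrank ℝ (Wk n (Sset n (Nat.le_of_succ_le hn)) (vp n hn m₁ m₂) k) := by
  classical
  set q := k / n with hq
  set W := Wk n (Sset n (Nat.le_of_succ_le hn)) (vp n hn m₁ m₂) k with hW
  have hle : W ≤ Msub n hn (m₁ + 2*(m₂+1)) k := Wk_le_Msub n hn (vp_mem_Dspan n hn m₁ m₂)
  haveI : FiniteDimensional ℝ (Msub n hn (m₁ + 2*(m₂+1)) k) := by
    rw [Msub]; infer_instance
  haveI : FiniteDimensional ℝ W := Submodule.finiteDimensional_of_le hle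
  have hmem : ∀ α : Fin (n-1) → Fin (q+1), Bp n hn (extf n q α) * vp n hn m₁ m₂ ∈ W := by
    intro α
    refine Wk_mono n _ _ (show ∑ j, extf n q α j ≤ k from ?_)
      (Bp_v_mem_Wk n hn (Nat.le_of_succ_le hn) (vp n hn m₁ m₂) _ (extf n q α) rfl (extf_last n q α))
    calc ∑ j, extf n q α j ≤ n * q := extf_sum_le n q α
      _ ≤ k := by rw [hq, mul_comm]; exact Nat.div_mul_le_self k n
  have hli : LinearIndependent ℝ (fun α : Fin (n-1) → Fin (q+1) =>
      (⟨Bp n hn (extf n q α) * vp n hn m₁ m₂, hmem α⟩ : W)) := by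
    apply LinearIndependent.of_comp W.subtype
    exact lin_indep_F n hn m₁ m₂ q
  have hcard := hli.fintype_card_le_finrank
  rwa [Fintype.card_fun, Fintype.card_fin, Fintype.card_fin] at hcard

end Main



/-- v = x_{n−1}^{m₁} ζ₁^{m₂+1} (0-based: x-index n−2). -/
theorem stmt_15 (n m₁ m₂ : ℕ) (hn : 3 ≤ n) :
    ∃ c₁ c₂ : ℝ, 0 < c₁ ∧ 0 < c₂ ∧ ∃ K : ℕ, ∀ k ≥ K,
      c₁ * (k : ℝ) ^ (n - 1) ≤
        (Module.finrank ℝ (Wk n (Sset n (by omega))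
          (X (Sum.inl (⟨n - 2, by omega⟩ : Fin n)) ^ m₁ * zeta1 n hn ^ (m₂ + 1)) k) : ℝ) ∧
      (Module.finrank ℝ (Wk n (Sset n (by omega))
          (X (Sum.inl (⟨n - 2, by omega⟩ : Fin n)) ^ m₁ * zeta1 n hn ^ (m₂ + 1)) k) : ℝ) ≤
        c₂ * (k : ℝ) ^ (n - 1) := by
  have hveq : X (Sum.inl (⟨n - 2, by omega⟩ : Fin n)) ^ m₁ * zeta1 n hn ^ (m₂ + 1)
      = vp n hn m₁ m₂ := rfl
  set d₀ := m₁ + 2*(m₂+1) with hd₀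
  set Cd := (DkF n d₀).card with hCd
  have hCd1 : 1 ≤ Cd := by
    rw [hCd]
    refine Finset.card_pos.mpr ⟨0, ?_⟩
    rw [mem_DkF]
    simp [Dg]
  have hn0 : (0:ℝ) < n := by positivity
  refine ⟨((n:ℝ))⁻¹ ^ (n-1), (Cd : ℝ) * 2^(n-1), by positivity,
    by
      have : (0:ℝ) < Cd := by exact_mod_cast hCd1
      positivity, 1, fun k hk => ?_⟩
  rw [hveq]
  constructor
  · -- lower bound
    have h1 := card_le_finrank_Wk n hn m₁ m₂ k
    have h1R : (((k / n + 1 : ℕ)) : ℝ)^(n-1)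
        ≤ (Module.finrank ℝ (Wk n (Sset n (by omega)) (vp n hn m₁ m₂) k) : ℝ) := by
      exact_mod_cast h1
    refine le_trans ?_ h1R
    have hklt : k < n * (k/n + 1) := by
      rw [Nat.mul_succ]
      have h2 := Nat.div_add_mod k n
      have h3 := Nat.mod_lt k (show 0 < n by omega)
      omega
    have hkltR : (k:ℝ) < (n:ℝ) * ((k/n : ℕ) + 1) := by exact_mod_cast hklt
    have hbase : (n:ℝ)⁻¹ * k ≤ ((k/n : ℕ) : ℝ) + 1 := by
      calc (n:ℝ)⁻¹ * k ≤ (n:ℝ)⁻¹ * ((n:ℝ) * ((k/n : ℕ) + 1)) :=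
            mul_le_mul_of_nonneg_left (le_of_lt hkltR) (by positivity)
        _ = ((k/n : ℕ) : ℝ) + 1 := by field_simp
    calc ((n:ℝ))⁻¹ ^ (n-1) * (k:ℝ) ^ (n-1) = ((n:ℝ)⁻¹ * k) ^ (n-1) := by
          rw [mul_pow]
      _ ≤ (((k/n : ℕ) : ℝ) + 1) ^ (n-1) := by
          apply pow_le_pow_left₀ (by positivity) hbase
      _ = (((k / n + 1 : ℕ)) : ℝ)^(n-1) := by push_cast; ring
  · -- upper bound
    have h1 := finrank_Wk_le n hn m₁ m₂ k
    have h1R : (Module.finrank ℝ (Wk n (Sset n (by omega)) (vp n hn m₁ m₂) k) : ℝ)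
        ≤ ((k+1 : ℝ))^(n-1) * Cd := by exact_mod_cast h1
    refine le_trans h1R ?_
    have hk1 : (1:ℝ) ≤ k := by exact_mod_cast hk
    have h2 : ((k:ℝ)+1) ≤ 2*k := by linarith
    calc ((k+1 : ℝ))^(n-1) * Cd ≤ (2*(k:ℝ))^(n-1) * Cd := by
          apply mul_le_mul_of_nonneg_right (pow_le_pow_left₀ (by positivity) h2 _)
            (by positivity)
      _ = (Cd : ℝ) * 2^(n-1) * (k:ℝ)^(n-1) := by rw [mul_pow]; ring
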